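/- arXiv:2303.05327 — 6 statements merged into one kernel-verified Lean document; each statement's English description precedes it below -/
import Mathlib

section
/- Let N ≥ 1 be a natural number and let m₀ = 3^(⌈log₃(4N³+1)⌉ + 1). Define h : ℤ → ZMod m₀ by h(a) = 2^{e(a)}, where e(a) is the unique integer in [0, φ(m₀)) congruent to a modulo φ(m₀). Then h is injective on the set of integers a with −2N³ ≤ a ≤ 2N³: if −2N³ ≤ a, b ≤ 2N³ and h(a) = h(b), then a = b. -/
lemma aux_two_pow (m : ℕ) :
    ∃ c : ℤ, (2:ℤ) ^ (2 * 3 ^ m) = 1 + 3 ^ (m+1) * c ∧ ¬ (3:ℤ) ∣ c := by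
  induction m with
  | zero => exact ⟨1, by norm_num, by norm_num⟩
  | succ m ih =>
    obtain ⟨c, hc, hc3⟩ := ih
    refine ⟨c + 3 ^ (m+1) * c^2 + 3 ^ (2*m+1) * c^3, ?_, ?_⟩
    · have h1 : (2:ℤ) ^ (2 * 3 ^ (m+1)) = ((2:ℤ) ^ (2 * 3 ^ m)) ^ 3 := by
        rw [← pow_mul]; ring_nf
      rw [h1, hc]; ring
    · intro h
      apply hc3
      have h2 : (3:ℤ) ∣ 3 ^ (m+1) * c^2 + 3 ^ (2*m+1) * c^3 :=
        dvd_add (dvd_mul_of_dvd_left (dvd_pow_self 3 (by omega)) _)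
          (dvd_mul_of_dvd_left (dvd_pow_self 3 (by omega)) _)
      have := h.sub h2
      simpa using this

lemma ord_two_zmod (m : ℕ) : orderOf (2 : ZMod (3 ^ (m+1))) = 2 * 3 ^ m := by
  have hpow : (2 : ZMod (3 ^ (m+1))) ^ (2 * 3 ^ m) = 1 := by
    obtain ⟨c, hc, -⟩ := aux_two_pow m
    have h := congrArg (fun x : ℤ => (x : ZMod (3 ^ (m+1)))) hc
    push_cast at h
    have h3 : ((3:ZMod (3 ^ (m+1)))) ^ (m+1) = 0 := by
      rw [show ((3:ZMod (3 ^ (m+1))) ^ (m+1)) = ((3 ^ (m+1) : ℕ) : ZMod (3 ^ (m+1))) by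
        push_cast; ring, ZMod.natCast_self]
    rw [h, h3]
    ring
  apply orderOf_eq_of_pow_and_pow_div_prime (by positivity) hpow
  intro p hp hpd
  rcases (Nat.Prime.dvd_mul hp).mp hpd with h2 | h3
  · -- p = 2
    have hp2 : p = 2 := (Nat.prime_dvd_prime_iff_eq hp Nat.prime_two).mp h2
    subst hp2
    have hdiv : 2 * 3 ^ m / 2 = 3 ^ m := by omega
    rw [hdiv]
    intro heq
    have h3dvd : (3:ℕ) ∣ 3 ^ (m+1) := dvd_pow_self 3 (by omega)
    have h := congrArg (ZMod.castHom h3dvd (ZMod 3)) heq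
    rw [map_pow, map_one, map_ofNat] at h
    obtain ⟨t, ht⟩ : Odd (3 ^ m) := Odd.pow (by decide)
    rw [show (3:ℕ) ^ m = 2 * t + 1 by omega, pow_succ, pow_mul] at h
    rw [show ((2:ZMod 3) ^ 2) = 1 by decide] at h
    simp only [one_pow, one_mul] at h
    exact absurd h (by decide)
  · -- p = 3
    have hp3 : p = 3 := (Nat.prime_dvd_prime_iff_eq hp Nat.prime_three).mp (hp.dvd_of_dvd_pow h3)
    subst hp3
    cases m with
    | zero => norm_num at hpd
    | succ m' =>
      have hdiv : 2 * 3 ^ (m' + 1) / 3 = 2 * 3 ^ m' := by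
        rw [pow_succ]
        omega
      rw [hdiv]
      intro heq
      obtain ⟨c, hc, hc3⟩ := aux_two_pow m'
      apply hc3
      have h := congrArg (fun x : ℤ => (x : ZMod (3 ^ (m' + 1 + 1)))) hc
      push_cast at h
      rw [heq] at h
      have h0 : ((3 ^ (m'+1) * c : ℤ) : ZMod (3 ^ (m' + 1 + 1))) = 0 := by
        push_cast
        linear_combination -h
      rw [ZMod.intCast_zmod_eq_zero_iff_dvd] at h0
      push_cast at h0
      have h1 : (3:ℤ) ^ (m' + 1 + 1) = 3 ^ (m'+1) * 3 := by ring
      rw [h1] at h0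
      exact (mul_dvd_mul_iff_left (pow_ne_zero (m'+1) (by norm_num : (3:ℤ) ≠ 0))).mp h0

/-- Let `N ≥ 1` and `m₀ = 3 ^ (⌈log₃ (4N³+1)⌉ + 1)`. Define `h : ℤ → ZMod m₀` by
`h a = 2 ^ e a`, where `e a` is the unique natural number in `[0, φ m₀)` congruent to
`a` modulo `φ m₀`. Then `h` is injective on the integers in `[-2N³, 2N³]`. -/
theorem stmt_3 (N : ℕ) (hN : 1 ≤ N) (a b : ℤ)
    (ha₁ : -(2 * (N : ℤ) ^ 3) ≤ a) (ha₂ : a ≤ 2 * (N : ℤ) ^ 3)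
    (hb₁ : -(2 * (N : ℤ) ^ 3) ≤ b) (hb₂ : b ≤ 2 * (N : ℤ) ^ 3)
    (hab :
      (fun x : ℤ => (2 : ZMod (3 ^ (Nat.clog 3 (4 * N ^ 3 + 1) + 1))) ^
          (x % (Nat.totient (3 ^ (Nat.clog 3 (4 * N ^ 3 + 1) + 1)) : ℤ)).toNat) a =
      (fun x : ℤ => (2 : ZMod (3 ^ (Nat.clog 3 (4 * N ^ 3 + 1) + 1))) ^
          (x % (Nat.totient (3 ^ (Nat.clog 3 (4 * N ^ 3 + 1) + 1)) : ℤ)).toNat) b) :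
    a = b := by
  set k := Nat.clog 3 (4 * N ^ 3 + 1) with hk
  simp only [] at hab
  set n := Nat.totient (3 ^ (k + 1)) with hn
  have hφ : n = 2 * 3 ^ k := by
    rw [hn, Nat.totient_prime_pow Nat.prime_three k.succ_pos, Nat.succ_sub_one]
    norm_num [mul_comm]
  have hnpos : (0:ℤ) < (n : ℤ) := by
    rw [hφ]; positivity
  have hea0 : 0 ≤ a % (n:ℤ) := Int.emod_nonneg a hnpos.ne'
  have hea1 : a % (n:ℤ) < (n:ℤ) := Int.emod_lt_of_pos a hnpos
  have heb0 : 0 ≤ b % (n:ℤ) := Int.emod_nonneg b hnpos.ne'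
  have heb1 : b % (n:ℤ) < (n:ℤ) := Int.emod_lt_of_pos b hnpos
  -- 2 is a unit
  have hu : IsUnit (2 : ZMod (3 ^ (k+1))) := by
    rw [show (2 : ZMod (3 ^ (k+1))) = ((2:ℕ) : ZMod (3 ^ (k+1))) by push_cast; ring,
      ZMod.isUnit_iff_coprime]
    exact Nat.Coprime.pow_right _ (by decide)
  have hord : orderOf hu.unit = 2 * 3 ^ k := by
    rw [← orderOf_units, hu.unit_spec, ord_two_zmod]
  have hupow : hu.unit ^ (a % (n:ℤ)).toNat = hu.unit ^ (b % (n:ℤ)).toNat := by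
    ext
    push_cast [hu.unit_spec]
    exact hab
  have heq : (a % (n:ℤ)).toNat = (b % (n:ℤ)).toNat := by
    apply pow_injOn_Iio_orderOf _ _ hupow
    · simp only [Set.mem_Iio, hord, ← hφ]
      omega
    · simp only [Set.mem_Iio, hord, ← hφ]
      omega
  have hmod : a % (n:ℤ) = b % (n:ℤ) := by omega
  have hdvd : (n:ℤ) ∣ a - b :=
    Int.dvd_of_emod_eq_zero (Int.emod_eq_emod_iff_emod_sub_eq_zero.mp hmod)
  have h3k : 4 * N ^ 3 + 1 ≤ 3 ^ k := Nat.le_pow_clog (by norm_num) _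
  have h3k' : 4 * (N:ℤ) ^ 3 + 1 ≤ 3 ^ k := by exact_mod_cast h3k
  have hnval : (n:ℤ) = 2 * 3 ^ k := by rw [hφ]; push_cast; ring
  have habs : |a - b| < (n:ℤ) := by
    rw [abs_lt, hnval]
    constructor <;> linarith
  have := Int.eq_zero_of_abs_lt_dvd hdvd habs
  omega
end

section
/- Let R be a finite set of pairs over types α × β. For a ∈ α, let cnt(a) denote the number of pairs in R whose first coordinate is a, and let C = { cnt(a) : a is the first coordinate of some pair in R } be the finite set of distinct counts. Then |C|·(|C|+1) ≤ 2·|R|; in particular |R| ≥ |C|²/2. -/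
lemma sum_image_le_nat {α : Type*} [DecidableEq α] (s : Finset α) (f : α → ℕ) :
    ∑ c ∈ s.image f, c ≤ ∑ a ∈ s, f a := by
  induction s using Finset.induction_on with
  | empty => simp
  | @insert a s ha ih =>
    rw [Finset.image_insert, Finset.sum_insert ha]
    by_cases h : f a ∈ s.image f
    · rw [Finset.insert_eq_self.mpr h]
      omega
    · rw [Finset.sum_insert h]
      omega

lemma gauss_lb (s : Finset ℕ) (h0 : 0 ∉ s) : s.card * (s.card + 1) ≤ 2 * ∑ i ∈ s, i := by
  induction s using Finset.induction_on_max with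
  | empty => simp
  | insert a t ht ih =>
    have ha : a ∉ t := fun h => lt_irrefl a (ht a h)
    rw [Finset.card_insert_of_notMem ha, Finset.sum_insert ha]
    have h0t : 0 ∉ t := fun h => h0 (Finset.mem_insert_of_mem h)
    have hsub : t ⊆ Finset.Ico 1 a := fun x hx => by
      have := ht x hx
      have : x ≠ 0 := fun h => h0t (h ▸ hx)
      simp only [Finset.mem_Ico]; omega
    have hcard : t.card ≤ a - 1 := by
      have := Finset.card_le_card hsub
      simpa using this
    have ha1 : 1 ≤ a := by
      rcases Nat.eq_zero_or_pos a with h | h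
      · exact absurd (h ▸ Finset.mem_insert_self a t) h0
      · exact h
    have hcard' : t.card + 1 ≤ a := by omega
    have := ih h0t
    nlinarith [hcard', this]

/-- Let `R` be a finite set of pairs. For `a`, let `cnt a` be the number of pairs of `R`
with first coordinate `a`, and let `C` be the set of distinct counts `cnt a` over first
coordinates `a` of pairs of `R`. Then `|C| * (|C| + 1) ≤ 2 * |R|`. -/
theorem stmt_6 {α β : Type*} [DecidableEq α] [DecidableEq β] (R : Finset (α × β)) :
    (((R.image Prod.fst).image fun a => (R.filter fun p => p.1 = a).card).card) *
        ((((R.image Prod.fst).image fun a => (R.filter fun p => p.1 = a).card).card) + 1) ≤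
      2 * R.card := by
  set A := R.image Prod.fst with hA
  set f : α → ℕ := fun a => (R.filter fun p => p.1 = a).card with hf
  set C := A.image f with hC
  have h0 : 0 ∉ C := by
    intro h
    obtain ⟨a, haA, hfa⟩ := Finset.mem_image.mp h
    obtain ⟨p, hpR, hpa⟩ := Finset.mem_image.mp haA
    have : p ∈ R.filter fun p => p.1 = a := Finset.mem_filter.mpr ⟨hpR, hpa⟩
    have h1 := Finset.card_pos.mpr ⟨p, this⟩
    have hfa' : (R.filter fun p => p.1 = a).card = 0 := hfa
    omega
  have h1 : ∑ c ∈ C, c ≤ ∑ a ∈ A, f a := sum_image_le_nat A f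
  have h2 : ∑ a ∈ A, f a = R.card :=
    (Finset.card_eq_sum_card_image Prod.fst R).symm
  have h3 := gauss_lb C h0
  omega
end

section
/- Let G be a tree on vertex set V, and let ℓ : V → Finset A be a labeling satisfying the running intersection property. Let W ⊆ V induce a connected subgraph of G, and let x₁, x₂ ∈ A be elements each occurring in the label ℓ(w) of some vertex w ∈ W. If there exists a vertex v ∈ V with {x₁, x₂} ⊆ ℓ(v), then there exists a vertex w ∈ W with {x₁, x₂} ⊆ ℓ(w). -/
open SimpleGraph

/-- Gluing two paths with a common endpoint: there is a "junction" vertex `m` on both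
paths, and a path between the two start vertices passing through `m`, whose support is
contained in the union of the supports. -/
lemma glue_paths {V : Type*} {G : SimpleGraph V} :
    ∀ {w₁ w₂ v : V} (p : G.Walk w₁ v) (q : G.Walk w₂ v), p.IsPath → q.IsPath →
      ∃ (m : V) (r : G.Walk w₁ w₂), r.IsPath ∧ m ∈ p.support ∧ m ∈ q.support ∧
        m ∈ r.support ∧ ∀ x ∈ r.support, x ∈ p.support ∨ x ∈ q.support := by
  classical
  intro w₁ w₂ v p q hp hq
  induction p generalizing w₂ with
  | @nil w =>
      exact ⟨w, q.reverse, hq.reverse, by simp, q.end_mem_support,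
        by simp, fun x hx => Or.inr (by simpa using hx)⟩
  | @cons a u v h p' ih =>
      by_cases haq : a ∈ q.support
      · refine ⟨a, (q.takeUntil a haq).reverse, (hq.takeUntil haq).reverse, by simp, haq,
          by simp, fun x hx => Or.inr ?_⟩
        exact q.support_takeUntil_subset haq (by simpa using hx)
      · have hp' := hp.of_cons
        obtain ⟨m, r', hr', hmp, hmq, hmr, hsub⟩ := ih q hp' hq
        have haru : a ∉ r'.support := fun har => by
          rcases hsub a har with h1 | h2
          · exact ((SimpleGraph.Walk.cons_isPath_iff h p').mp hp).2 h1
          · exact haq h2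
        refine ⟨m, SimpleGraph.Walk.cons h r', ?_, ?_, hmq, ?_, ?_⟩
        · exact (SimpleGraph.Walk.cons_isPath_iff h r').mpr ⟨hr', haru⟩
        · simp only [SimpleGraph.Walk.support_cons, List.mem_cons]; exact Or.inr hmp
        · simp only [SimpleGraph.Walk.support_cons, List.mem_cons]; exact Or.inr hmr
        · intro x hx
          simp only [SimpleGraph.Walk.support_cons, List.mem_cons] at hx
          rcases hx with rfl | hx
          · exact Or.inl (SimpleGraph.Walk.start_mem_support _)
          · rcases hsub x hx with h1 | h2
            · exact Or.inl (by simp [SimpleGraph.Walk.support_cons, h1])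
            · exact Or.inr h2

/-- In a tree, a path between two vertices of a connected induced subgraph stays inside it. -/
lemma path_support_subset_of_connected {V : Type*} {G : SimpleGraph V} (hG : G.IsTree)
    {S : Set V} (hS : (G.induce S).Connected) {u v : V} (hu : u ∈ S) (hv : v ∈ S)
    (p : G.Walk u v) (hp : p.IsPath) : ∀ x ∈ p.support, x ∈ S := by
  classical
  obtain ⟨q⟩ := hS ⟨u, hu⟩ ⟨v, hv⟩
  let q' : G.Walk u v := q.map (SimpleGraph.Embedding.induce S).toHom
  have hsub : ∀ x ∈ q'.support, x ∈ S := by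
    intro x hx
    rw [show q'.support = q.support.map _ from SimpleGraph.Walk.support_map _ _] at hx
    obtain ⟨⟨y, hy⟩, -, rfl⟩ := List.mem_map.mp hx
    exact hy
  have heq : p = q'.bypass :=
    (hG.existsUnique_path u v).unique hp q'.bypass_isPath
  intro x hx
  exact hsub x (q'.support_bypass_subset (heq ▸ hx))

/-- A labeling `ℓ : V → Finset A` of the vertices of a graph `G` satisfies the running
intersection property if for every `a : A`, the set of vertices whose label contains `a`
is empty or induces a connected subgraph of `G`. -/
def RunningIntersection {V A : Type*} (G : SimpleGraph V) (ℓ : V → Finset A) : Prop :=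
  ∀ a : A, {v : V | a ∈ ℓ v} = ∅ ∨ (G.induce {v : V | a ∈ ℓ v}).Connected

/-- Let `G` be a tree with a labeling `ℓ` satisfying the running intersection property,
let `W` induce a connected subgraph of `G`, and let `x₁, x₂` each occur in the label of
some vertex of `W`. If some vertex of `G` has both `x₁` and `x₂` in its label, then some
vertex of `W` has both `x₁` and `x₂` in its label. -/
theorem stmt_11 {V A : Type*} (G : SimpleGraph V) (hG : G.IsTree)
    (ℓ : V → Finset A) (hRIP : RunningIntersection G ℓ)
    (W : Set V) (hW : (G.induce W).Connected)
    (x₁ x₂ : A)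
    (h₁ : ∃ w ∈ W, x₁ ∈ ℓ w) (h₂ : ∃ w ∈ W, x₂ ∈ ℓ w)
    (hv : ∃ v : V, x₁ ∈ ℓ v ∧ x₂ ∈ ℓ v) :
    ∃ w ∈ W, x₁ ∈ ℓ w ∧ x₂ ∈ ℓ w := by
  obtain ⟨w₁, hw₁W, hw₁⟩ := h₁
  obtain ⟨w₂, hw₂W, hw₂⟩ := h₂
  obtain ⟨v, hv₁, hv₂⟩ := hv
  have hS₁ : (G.induce {u : V | x₁ ∈ ℓ u}).Connected := by
    rcases hRIP x₁ with h | h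
    · exact absurd h (Set.nonempty_iff_ne_empty.mp ⟨w₁, hw₁⟩)
    · exact h
  have hS₂ : (G.induce {u : V | x₂ ∈ ℓ u}).Connected := by
    rcases hRIP x₂ with h | h
    · exact absurd h (Set.nonempty_iff_ne_empty.mp ⟨w₂, hw₂⟩)
    · exact h
  obtain ⟨p, hp, -⟩ := hG.existsUnique_path w₁ v
  obtain ⟨q, hq, -⟩ := hG.existsUnique_path w₂ v
  obtain ⟨m, r, hr, hmp, hmq, hmr, -⟩ := glue_paths p q hp hq
  have hm₁ : x₁ ∈ ℓ m :=
    path_support_subset_of_connected hG hS₁ hw₁ hv₁ p hp m hmp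
  have hm₂ : x₂ ∈ ℓ m :=
    path_support_subset_of_connected hG hS₂ hw₂ hv₂ q hq m hmq
  have hmW : m ∈ W :=
    path_support_subset_of_connected hG hW hw₁W hw₂W r hr m hmr
  exact ⟨m, hmW, hm₁, hm₂⟩
end

section
/- Let G be a tree on vertex set V, let ℓ : V → Finset A be a labeling satisfying the running intersection property, and let v₀ ∈ V. Then the set {u ∈ V : ℓ(v₀) ⊆ ℓ(u)}, which contains v₀, induces a connected subgraph of G. Consequently, if a fresh element y ∉ A is added to the label of exactly those vertices u with ℓ(v₀) ⊆ ℓ(u), the extended labeling into Finset (A ⊕ {y}) still satisfies the running intersection property. -/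
/-- In a tree, the support of any path between two vertices of a connected induced set
stays in that set. -/
lemma path_support_subset_of_induce_connected {V : Type*} {G : SimpleGraph V}
    (hG : G.IsTree) {s : Set V} (hs : (G.induce s).Connected)
    {u v : V} (hu : u ∈ s) (hv : v ∈ s) (p : G.Walk u v) (hp : p.IsPath) :
    ∀ x ∈ p.support, x ∈ s := by
  classical
  obtain ⟨q0⟩ := hs ⟨u, hu⟩ ⟨v, hv⟩
  let q : G.Walk u v := q0.map (SimpleGraph.Embedding.induce s).toHom
  have hqsupp : ∀ x ∈ q.support, x ∈ s := by
    intro x hx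
    change x ∈ (q0.map (SimpleGraph.Embedding.induce s).toHom).support at hx
    rw [SimpleGraph.Walk.support_map, List.mem_map] at hx
    obtain ⟨⟨y, hy⟩, -, rfl⟩ := hx
    exact hy
  have huniq := hG.existsUnique_path u v
  have : q.toPath.val = p := by
    have h1 := huniq.unique q.toPath.property hp
    exact h1
  intro x hx
  rw [← this] at hx
  exact hqsupp x (q.support_toPath_subset hx)

/-- Let `G` be a tree with a labeling `ℓ` satisfying the running intersection property,
and let `v₀` be a vertex. Then the set of vertices whose label contains `ℓ v₀` contains
`v₀` and induces a connected subgraph of `G`; consequently, adding a fresh element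
(`Sum.inr ()`) to the labels of exactly those vertices preserves the running
intersection property. -/
theorem stmt_12 {V A : Type*} [DecidableEq A] (G : SimpleGraph V) (hG : G.IsTree)
    (ℓ : V → Finset A) (hRIP : RunningIntersection G ℓ) (v₀ : V) :
    (v₀ ∈ {u : V | ℓ v₀ ⊆ ℓ u} ∧ (G.induce {u : V | ℓ v₀ ⊆ ℓ u}).Connected) ∧
    RunningIntersection G (fun u : V =>
      (ℓ u).image Sum.inl ∪
        (if ℓ v₀ ⊆ ℓ u then {(Sum.inr () : A ⊕ Unit)} else ∅)) := by
  have hv₀ : v₀ ∈ {u : V | ℓ v₀ ⊆ ℓ u} := by simp [Set.mem_setOf_eq]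
  have hSconn : (G.induce {u : V | ℓ v₀ ⊆ ℓ u}).Connected := by
    apply G.induce_connected_of_patches v₀ hv₀
    intro v hv
    obtain ⟨p0⟩ := hG.isConnected.preconnected v₀ v
    obtain ⟨p, hp, -⟩ := hG.existsUnique_path v₀ v
    have hsupp : ∀ x ∈ p.support, x ∈ {u : V | ℓ v₀ ⊆ ℓ u} := by
      intro x hx a ha
      have hconn : (G.induce {u : V | a ∈ ℓ u}).Connected := by
        rcases hRIP a with h | h
        · exact absurd (Set.eq_empty_iff_forall_notMem.mp h v₀ ha) (by simp)
        · exact h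
      exact path_support_subset_of_induce_connected hG hconn ha (hv ha) p hp x hx
    refine ⟨{x | x ∈ p.support}, hsupp, p.start_mem_support, p.end_mem_support, ?_⟩
    exact (p.connected_induce_support ⟨v₀, p.start_mem_support⟩
      ⟨v, p.end_mem_support⟩)
  refine ⟨⟨hv₀, hSconn⟩, ?_⟩
  intro a
  rcases a with a | u
  · have hset : {v : V | Sum.inl a ∈ (ℓ v).image Sum.inl ∪
        (if ℓ v₀ ⊆ ℓ v then {(Sum.inr () : A ⊕ Unit)} else ∅)} = {v : V | a ∈ ℓ v} := by
      ext v
      by_cases h : ℓ v₀ ⊆ ℓ v <;> simp [h]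
    rw [hset]
    exact hRIP a
  · right
    have hset : {v : V | Sum.inr u ∈ (ℓ v).image Sum.inl ∪
        (if ℓ v₀ ⊆ ℓ v then {(Sum.inr () : A ⊕ Unit)} else ∅)} = {u : V | ℓ v₀ ⊆ ℓ u} := by
      ext v
      by_cases h : ℓ v₀ ⊆ ℓ v <;> simp [h]
    rw [hset]
    exact hSconn
end

section
/- Let G be a tree on vertex set V, let ℓ : V → Finset A be a labeling satisfying the running intersection property, let v₀ ∈ V, and let x₁ ∈ A be an element occurring in the label of at least one vertex. If for every a ∈ ℓ(v₀) there exists a vertex u ∈ V with {a, x₁} ⊆ ℓ(u), then there exists a vertex w ∈ V with ℓ(v₀) ∪ {x₁} ⊆ ℓ(w). -/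
open SimpleGraph Walk

/-- The inclusion homomorphism from an induced subgraph. -/
def inducedHom {V : Type*} {G : SimpleGraph V} (S : Set V) : G.induce S →g G :=
  ⟨Subtype.val, fun h => h⟩

lemma path_length_eq_dist {V : Type*} {G : SimpleGraph V} (hG : G.IsTree) {u v : V}
    (p : G.Walk u v) (hp : p.IsPath) : p.length = G.dist u v := by
  obtain ⟨p', hp', hlen⟩ := (Reachable.exists_path_of_dist ⟨p⟩)
  have := (hG.existsUnique_path u v).unique hp hp'
  rw [this, hlen]

lemma path_in_set {V : Type*} {G : SimpleGraph V} (hG : G.IsTree) {S : Set V}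
    (hconn : (G.induce S).Connected) {a b : V} (ha : a ∈ S) (hb : b ∈ S) :
    ∃ p : G.Walk a b, p.IsPath ∧ ∀ z ∈ p.support, z ∈ S := by
  classical
  obtain ⟨w⟩ := hconn ⟨a, ha⟩ ⟨b, hb⟩
  refine ⟨((w.map (inducedHom S)).toPath.1).copy rfl rfl,
    (Walk.isPath_copy _ _ _).mpr ((w.map (inducedHom S)).toPath).2, fun z hz => ?_⟩
  change z ∈ ((w.map (inducedHom S)).toPath.1).support at hz
  have h2 := Walk.support_toPath_subset (w.map (inducedHom S)) hz
  rw [Walk.support_map] at h2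
  obtain ⟨z', _, rfl⟩ := List.mem_map.mp h2
  exact z'.2

/-- Let `G` be a tree with a labeling `ℓ` satisfying the running intersection property,
let `v₀` be a vertex and `x₁` an element occurring in the label of some vertex. If for
every `a ∈ ℓ v₀` some vertex has both `a` and `x₁` in its label, then some vertex `w`
has `ℓ v₀ ∪ {x₁} ⊆ ℓ w`. -/
theorem stmt_13 {V A : Type*} [DecidableEq A] (G : SimpleGraph V) (hG : G.IsTree)
    (ℓ : V → Finset A) (hRIP : RunningIntersection G ℓ) (v₀ : V) (x₁ : A)
    (hx₁ : ∃ u : V, x₁ ∈ ℓ u)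
    (h : ∀ a ∈ ℓ v₀, ∃ u : V, a ∈ ℓ u ∧ x₁ ∈ ℓ u) :
    ∃ w : V, ℓ v₀ ∪ {x₁} ⊆ ℓ w := by
  classical
  set S₁ : Set V := {v : V | x₁ ∈ ℓ v} with hS₁def
  obtain ⟨u₀, hu₀⟩ := hx₁
  have hu₀S : u₀ ∈ S₁ := hu₀
  have hS₁conn : (G.induce S₁).Connected := by
    rcases hRIP x₁ with he | hc
    · exact absurd (he ▸ (hu₀S : u₀ ∈ {v : V | x₁ ∈ ℓ v})) (Set.notMem_empty u₀)
    · exact hc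
  -- choose u ∈ S₁ minimizing distance to v₀
  have hP : ∃ n, ∃ u ∈ S₁, G.dist v₀ u = n := ⟨_, u₀, hu₀S, rfl⟩
  obtain ⟨u, huS₁, hud⟩ := Nat.find_spec hP
  have hmin : ∀ z ∈ S₁, G.dist v₀ u ≤ G.dist v₀ z := fun z hz => by
    rw [hud]; exact Nat.find_min' hP ⟨z, hz, rfl⟩
  obtain ⟨p, hp, hpuniq⟩ := hG.existsUnique_path v₀ u
  refine ⟨u, fun a ha => ?_⟩
  rcases Finset.mem_union.mp ha with ha | ha
  swap
  · rw [Finset.mem_singleton] at ha; subst ha; exact huS₁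
  -- main case : a ∈ ℓ v₀
  set Sa : Set V := {v : V | a ∈ ℓ v} with hSadef
  have hv₀Sa : v₀ ∈ Sa := ha
  have hSaconn : (G.induce Sa).Connected := by
    rcases hRIP a with he | hc
    · exact absurd (he ▸ (hv₀Sa : v₀ ∈ {v : V | a ∈ ℓ v})) (Set.notMem_empty v₀)
    · exact hc
  obtain ⟨ua, haua, hxua⟩ := h a ha
  obtain ⟨q, hq, hqS⟩ := path_in_set hG hSaconn hv₀Sa (haua : ua ∈ Sa)
  obtain ⟨r, hr, hrS⟩ := path_in_set hG hS₁conn (hxua : ua ∈ S₁) huS₁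
  -- Fact 3 : any vertex on p that lies in S₁ equals u
  have fact3 : ∀ z (hzp : z ∈ p.support), z ∈ S₁ → z = u := by
    intro z hzp hzS
    have h1 : G.dist v₀ u ≤ G.dist v₀ z := hmin z hzS
    have h2 : (p.takeUntil z hzp).length = G.dist v₀ z :=
      path_length_eq_dist hG _ (hp.takeUntil hzp)
    have h3 : (p.takeUntil z hzp).length + (p.dropUntil z hzp).length = p.length := by
      rw [← Walk.length_append, Walk.take_spec]
    have h4 : p.length = G.dist v₀ u := path_length_eq_dist hG p hp
    have h5 : (p.dropUntil z hzp).length = 0 := by omega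
    exact Walk.eq_of_length_eq_zero h5
  -- Fact 1 : support of p is contained in supports of q and r
  have fact1 : ∀ z ∈ p.support, z ∈ q.support ∨ z ∈ r.support := by
    intro z hz
    have hqr : ((q.append r).toPath : G.Walk v₀ u) = p := hpuniq _ (q.append r).toPath.2
    rw [← hqr] at hz
    have h2 := Walk.support_toPath_subset _ hz
    rw [Walk.support_append] at h2
    rcases List.mem_append.mp h2 with h' | h'
    · exact Or.inl h'
    · exact Or.inr (List.mem_of_mem_tail h')
  -- Fact 2 : support of r is contained in supports of q and p
  have fact2 : ∀ z ∈ r.support, z ∈ q.support ∨ z ∈ p.support := by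
    intro z hz
    have hqr : ((q.reverse.append p).toPath : G.Walk ua u) = r :=
      (hG.existsUnique_path ua u).unique (q.reverse.append p).toPath.2 hr
    rw [← hqr] at hz
    have h2 := Walk.support_toPath_subset _ hz
    rw [Walk.support_append] at h2
    rcases List.mem_append.mp h2 with h' | h'
    · exact Or.inl (by rwa [Walk.support_reverse, List.mem_reverse] at h')
    · exact Or.inr (List.mem_of_mem_tail h')
  -- it suffices to show u ∈ q.support
  suffices hu : u ∈ q.support by exact hqS u hu
  by_contra hu
  -- p is nontrivial (else u = v₀ ∈ q.support)
  rcases Nat.eq_zero_or_pos p.length with hp0 | hppos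
  · exact hu ((Walk.eq_of_length_eq_zero hp0) ▸ q.start_mem_support)
  -- r is nontrivial (else ua = u, but ua ∈ q.support as endpoint)
  rcases Nat.eq_zero_or_pos r.length with hr0 | hrpos
  · exact hu ((Walk.eq_of_length_eq_zero hr0) ▸ q.end_mem_support)
  -- neighbor z of u on p
  obtain ⟨z, hadjz, hzp, hzu⟩ : ∃ z, G.Adj u z ∧ z ∈ p.support ∧ z ≠ u := by
    cases hpr : p.reverse with
    | nil => rw [← Walk.length_reverse, hpr] at hppos; simp at hppos
    | cons hadj w =>
      have hrev : p.reverse.IsPath := hp.reverse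
      rw [hpr, Walk.cons_isPath_iff] at hrev
      refine ⟨_, hadj, ?_, fun hzeq => hrev.2 (hzeq ▸ w.start_mem_support)⟩
      rw [← List.mem_reverse, ← Walk.support_reverse, hpr, Walk.support_cons]
      exact List.mem_cons_of_mem _ w.start_mem_support
  -- neighbor z' of u on r
  obtain ⟨z', hadjz', hzr', hzu'⟩ : ∃ z', G.Adj u z' ∧ z' ∈ r.support ∧ z' ≠ u := by
    cases hrr : r.reverse with
    | nil => rw [← Walk.length_reverse, hrr] at hrpos; simp at hrpos
    | cons hadj w =>
      have hrev : r.reverse.IsPath := hr.reverse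
      rw [hrr, Walk.cons_isPath_iff] at hrev
      refine ⟨_, hadj, ?_, fun hzeq => hrev.2 (hzeq ▸ w.start_mem_support)⟩
      rw [← List.mem_reverse, ← Walk.support_reverse, hrr, Walk.support_cons]
      exact List.mem_cons_of_mem _ w.start_mem_support
  -- z ∈ q.support (not in r, else z = u)
  have hzq : z ∈ q.support := by
    rcases fact1 z hzp with h' | h'
    · exact h'
    · exact absurd (fact3 z hzp (hrS z h')) hzu
  -- z' ∈ q.support (not in p, else z' = u)
  have hzq' : z' ∈ q.support := by
    rcases fact2 z' hzr' with h' | h'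
    · exact h'
    · exact absurd (fact3 z' h' (hrS z' hzr')) hzu'
  -- z ≠ z'
  have hzz : z ≠ z' := by
    intro hzeq
    exact hzu (fact3 z hzp (hrS z (hzeq ▸ hzr')))
  -- the unique path between z and z' passes through u, but it lies inside q : contradiction
  have hP2 : (Walk.cons hadjz.symm (Walk.cons hadjz' Walk.nil)).IsPath := by
    rw [Walk.isPath_def]
    simp [hzu, hzz, hadjz'.ne]
  set W : G.Walk z z' := (q.takeUntil z hzq).reverse.append (q.takeUntil z' hzq') with hWdef
  have hWq : ∀ y ∈ W.support, y ∈ q.support := by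
    intro y hy
    rw [hWdef, Walk.mem_support_append_iff, Walk.support_reverse, List.mem_reverse] at hy
    rcases hy with hy | hy
    · exact Walk.support_takeUntil_subset _ _ hy
    · exact Walk.support_takeUntil_subset _ _ hy
  have hWP : (W.toPath : G.Walk z z') = Walk.cons hadjz.symm (Walk.cons hadjz' Walk.nil) :=
    (hG.existsUnique_path z z').unique W.toPath.2 hP2
  have huW : u ∈ W.support := by
    have : u ∈ (W.toPath : G.Walk z z').support := by
      rw [hWP, Walk.support_cons]
      exact List.mem_cons_of_mem _ (Walk.start_mem_support _)
    exact Walk.support_toPath_subset W this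
  exact hu (hWq u huW)
end

section
/- Let V be a finite set of variables, y ∉ V a fresh variable, and r : V ∪ {y} → ℚ an injective rank function. Let Z ⊆ V be such that r(y) < r(z) for every z ∈ Z and r(v) < r(y) for every v ∈ V \ Z. Let E be a finite family of subsets of V such that every e ∈ E satisfies Z ⊆ e or e ∩ Z = ∅. Let A = {e ∈ E : e ∩ Z ≠ ∅}, and suppose there is φ ∈ A such that every element occurring in some member of A belongs to φ. If E has no disruptive trio with respect to r, then the family E' obtained from E by replacing φ with φ ∪ {y} has no disruptive trio with respect to r. -/
/-- Two distinct variables are neighbors w.r.t. a family `E` of atoms (finite sets of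
variables) if some atom of `E` contains both. -/
def Neighbors {α : Type*} (E : Finset (Finset α)) (x₁ x₂ : α) : Prop :=
  x₁ ≠ x₂ ∧ ∃ e ∈ E, x₁ ∈ e ∧ x₂ ∈ e

/-- A disruptive trio w.r.t. a family `E` of atoms and a rank function `r`: three
distinct variables `x₁, x₂, x₃` such that `x₁` and `x₂` each neighbor `x₃` but not each
other, and `x₃` succeeds both `x₁` and `x₂` in the order given by `r`. -/
def HasDisruptiveTrio {α : Type*} (E : Finset (Finset α)) (r : α → ℚ) : Prop :=
  ∃ x₁ x₂ x₃ : α, x₁ ≠ x₂ ∧ x₁ ≠ x₃ ∧ x₂ ≠ x₃ ∧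
    Neighbors E x₁ x₃ ∧ Neighbors E x₂ x₃ ∧ ¬ Neighbors E x₁ x₂ ∧
    r x₁ < r x₃ ∧ r x₂ < r x₃

/-- Let `V` be a finite set of variables, `y ∉ V` fresh, and `r` an injective rank
function on `V ∪ {y}`. Let `Z ⊆ V` consist exactly of the variables ranked after `y`
(all other variables of `V` are ranked before `y`). Let `E` be a family of subsets of
`V` each of which contains all of `Z` or none of it, and let `φ ∈ E` meet `Z` and
contain every variable occurring in an atom of `E` that meets `Z`. If `E` has no
disruptive trio w.r.t. `r`, then the family obtained from `E` by replacing `φ` with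
`φ ∪ {y}` has no disruptive trio w.r.t. `r`. -/
theorem stmt_14 {α : Type*} [DecidableEq α] (V : Finset α) (y : α) (hy : y ∉ V)
    (r : α → ℚ) (hr : Set.InjOn r (insert y (V : Set α)))
    (Z : Finset α) (hZV : Z ⊆ V)
    (hyZ : ∀ z ∈ Z, r y < r z) (hVy : ∀ v ∈ V \ Z, r v < r y)
    (E : Finset (Finset α)) (hEV : ∀ e ∈ E, e ⊆ V)
    (hsplit : ∀ e ∈ E, Z ⊆ e ∨ e ∩ Z = ∅)
    (φ : Finset α) (hφE : φ ∈ E) (hφZ : (φ ∩ Z).Nonempty)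
    (hcover : ∀ e ∈ E, (e ∩ Z).Nonempty → e ⊆ φ)
    (hnd : ¬ HasDisruptiveTrio E r) :
    ¬ HasDisruptiveTrio (insert (insert y φ) (E.erase φ)) r := by
  set E' := insert (insert y φ) (E.erase φ) with hE'
  have hyE : ∀ e ∈ E, y ∉ e := fun e he h => hy (hEV e he h)
  have toE' : ∀ a b, Neighbors E a b → Neighbors E' a b := by
    rintro a b ⟨hab, e, he, ha, hb⟩
    refine ⟨hab, ?_⟩
    by_cases heφ : e = φ
    · exact ⟨insert y φ, Finset.mem_insert_self _ _,
        Finset.mem_insert_of_mem (heφ ▸ ha), Finset.mem_insert_of_mem (heφ ▸ hb)⟩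
    · exact ⟨e, Finset.mem_insert_of_mem (Finset.mem_erase.mpr ⟨heφ, he⟩), ha, hb⟩
  have fromE' : ∀ a b, a ≠ y → b ≠ y → Neighbors E' a b → Neighbors E a b := by
    rintro a b hay hby ⟨hab, e, he, ha, hb⟩
    refine ⟨hab, ?_⟩
    rcases Finset.mem_insert.mp he with heq | he
    · subst heq
      exact ⟨φ, hφE, (Finset.mem_insert.mp ha).resolve_left hay,
        (Finset.mem_insert.mp hb).resolve_left hby⟩
    · exact ⟨e, Finset.mem_of_mem_erase he, ha, hb⟩
  have yNbr : ∀ a b, Neighbors E' a b → a = y → b ∈ φ := by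
    rintro a b ⟨hab, e, he, ha, hb⟩ rfl
    rcases Finset.mem_insert.mp he with heq | he
    · subst heq
      exact (Finset.mem_insert.mp hb).resolve_left (Ne.symm hab)
    · exact absurd ha (hyE e (Finset.mem_of_mem_erase he))
  rintro ⟨x₁, x₂, x₃, h12, h13, h23, n13, n23, hn12, hr1, hr2⟩
  have symmN : ∀ a b, Neighbors E' a b → Neighbors E' b a := by
    rintro a b ⟨hab, e, he, ha, hb⟩; exact ⟨hab.symm, e, he, hb, ha⟩
  by_cases h3 : x₃ = y
  · have h1φ : x₁ ∈ φ := yNbr _ _ (symmN _ _ n13) h3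
    have h2φ : x₂ ∈ φ := yNbr _ _ (symmN _ _ n23) h3
    exact hn12 ⟨h12, insert y φ, Finset.mem_insert_self _ _,
      Finset.mem_insert_of_mem h1φ, Finset.mem_insert_of_mem h2φ⟩
  · -- x₃ ≠ y
    have key : ∀ a b, a = y → b ≠ y → Neighbors E' a b → r a < r b → b ∈ Z := by
      rintro a b rfl hby nb hrb
      have hbφ : b ∈ φ := yNbr _ _ nb rfl
      have hbV : b ∈ V := hEV φ hφE hbφ
      by_contra hbZ
      exact absurd hrb (not_lt.mpr (le_of_lt (hVy b (Finset.mem_sdiff.mpr ⟨hbV, hbZ⟩))))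
    by_cases h1 : x₁ = y
    · have h2y : x₂ ≠ y := fun h => h12 (h1.trans h.symm)
      have h3Z : x₃ ∈ Z := key _ _ h1 h3 n13 hr1
      obtain ⟨_, e, he, h2e, h3e⟩ := fromE' _ _ h2y h3 n23
      have h2φ : x₂ ∈ φ := hcover e he ⟨x₃, Finset.mem_inter.mpr ⟨h3e, h3Z⟩⟩ h2e
      exact hn12 ⟨h12, insert y φ, Finset.mem_insert_self _ _,
        by rw [h1]; exact Finset.mem_insert_self _ _, Finset.mem_insert_of_mem h2φ⟩
    · by_cases h2 : x₂ = y
      · have h3Z : x₃ ∈ Z := key _ _ h2 h3 n23 hr2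
        obtain ⟨_, e, he, h1e, h3e⟩ := fromE' _ _ h1 h3 n13
        have h1φ : x₁ ∈ φ := hcover e he ⟨x₃, Finset.mem_inter.mpr ⟨h3e, h3Z⟩⟩ h1e
        exact hn12 ⟨h12, insert y φ, Finset.mem_insert_self _ _,
          Finset.mem_insert_of_mem h1φ, by rw [h2]; exact Finset.mem_insert_self _ _⟩
      · exact hnd ⟨x₁, x₂, x₃, h12, h13, h23, fromE' _ _ h1 h3 n13,
          fromE' _ _ h2 h3 n23, fun h => hn12 (toE' _ _ h), hr1, hr2⟩
end
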